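/- Let (A^e, m, h) be the universal enveloping algebra of a DG Poisson algebra A with bracket of degree 0. Then the DG opposite algebra (A^{eop}, m, h) is the universal enveloping algebra of A_1 = (A, ·, {·,·}_1, d), where {a,b}_1 = -{a,b}. -/

import Mathlib

open TensorProduct

namespace DGPH

variable {k : Type} [Field k]

/-- The `n`-th graded piece of the induced grading on a tensor product of graded modules. -/
def tgrade {M N : Type} [AddCommGroup M] [Module k M] [AddCommGroup N] [Module k N]
    (𝒜 : ℤ → Submodule k M) (ℬ : ℤ → Submodule k N) (n : ℤ) : Submodule k (M ⊗[k] N) :=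
  ⨆ ij : {q : ℤ × ℤ // q.1 + q.2 = n},
    Submodule.span k
      (Set.image2 (fun a b => a ⊗ₜ[k] b) ((𝒜 ij.1.1 : Set M)) ((ℬ ij.1.2 : Set N)))

/-- Characterization of the Koszul-signed multiplication on a tensor product:
`(a ⊗ b)(a' ⊗ b') = (-1)^{|a'||b|} (a a') ⊗ (b b')`. -/
def KoszulMulChar {M N : Type} [AddCommGroup M] [Module k M] [AddCommGroup N] [Module k N]
    (𝒜 : ℤ → Submodule k M) (ℬ : ℤ → Submodule k N)
    (mulM : M →ₗ[k] M →ₗ[k] M) (mulN : N →ₗ[k] N →ₗ[k] N)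
    (μ : (M ⊗[k] N) →ₗ[k] (M ⊗[k] N) →ₗ[k] (M ⊗[k] N)) : Prop :=
  ∀ ⦃i j : ℤ⦄ (a : M) ⦃a' : M⦄ ⦃b : N⦄ (b' : N), a' ∈ 𝒜 i → b ∈ ℬ j →
    μ (a ⊗ₜ[k] b) (a' ⊗ₜ[k] b') = ((-1 : k) ^ (i * j)) • ((mulM a a') ⊗ₜ[k] (mulN b b'))

/-- Characterization of the Koszul-signed Poisson bracket of degree `p` on a tensor product:
`{a⊗b, a'⊗b'} = (-1)^{(|a'|+p)|b|} {a,a'} ⊗ (bb') + (-1)^{(|b|+p)|a'|} (aa') ⊗ {b,b'}`. -/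
def KoszulBracketChar {M N : Type} [AddCommGroup M] [Module k M] [AddCommGroup N] [Module k N]
    (𝒜 : ℤ → Submodule k M) (ℬ : ℤ → Submodule k N)
    (mulM : M →ₗ[k] M →ₗ[k] M) (mulN : N →ₗ[k] N →ₗ[k] N)
    (brM : M →ₗ[k] M →ₗ[k] M) (brN : N →ₗ[k] N →ₗ[k] N) (p : ℤ)
    (β : (M ⊗[k] N) →ₗ[k] (M ⊗[k] N) →ₗ[k] (M ⊗[k] N)) : Prop :=
  ∀ ⦃i j : ℤ⦄ (a : M) ⦃a' : M⦄ ⦃b : N⦄ (b' : N), a' ∈ 𝒜 i → b ∈ ℬ j →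
    β (a ⊗ₜ[k] b) (a' ⊗ₜ[k] b') =
      ((-1 : k) ^ ((i + p) * j)) • ((brM a a') ⊗ₜ[k] (mulN b b')) +
      ((-1 : k) ^ ((j + p) * i)) • ((mulM a a') ⊗ₜ[k] (brN b b'))

/-- Characterization of the Koszul-signed differential on a tensor product:
`d(a ⊗ b) = d a ⊗ b + (-1)^{|a|} a ⊗ d b`. -/
def KoszulDiffChar {M N : Type} [AddCommGroup M] [Module k M] [AddCommGroup N] [Module k N]
    (𝒜 : ℤ → Submodule k M) (dM : M →ₗ[k] M) (dN : N →ₗ[k] N)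
    (D : M ⊗[k] N →ₗ[k] M ⊗[k] N) : Prop :=
  ∀ ⦃i : ℤ⦄ ⦃a : M⦄ (b : N), a ∈ 𝒜 i →
    D (a ⊗ₜ[k] b) = (dM a) ⊗ₜ[k] b + ((-1 : k) ^ i) • (a ⊗ₜ[k] (dN b))

/-- Characterization of the Koszul twist `T(a ⊗ b) = (-1)^{|a||b|} b ⊗ a`. -/
def KoszulTwistChar {M N : Type} [AddCommGroup M] [Module k M] [AddCommGroup N] [Module k N]
    (𝒜 : ℤ → Submodule k M) (ℬ : ℤ → Submodule k N)
    (T : M ⊗[k] N →ₗ[k] N ⊗[k] M) : Prop :=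
  ∀ ⦃i j : ℤ⦄ ⦃a : M⦄ ⦃b : N⦄, a ∈ 𝒜 i → b ∈ ℬ j →
    T (a ⊗ₜ[k] b) = ((-1 : k) ^ (i * j)) • (b ⊗ₜ[k] a)

section Structures

variable (k)
variable (M : Type) [AddCommGroup M] [Module k M]

/-- A `ℤ`-graded associative unital algebra, given by unbundled data. -/
structure IsGradedAlgebra (𝒜 : ℤ → Submodule k M) (mul : M →ₗ[k] M →ₗ[k] M) (one : M) :
    Prop where
  indep : iSupIndep 𝒜
  total : (⨆ i, 𝒜 i) = ⊤
  mul_mem : ∀ ⦃i j : ℤ⦄ ⦃a b : M⦄, a ∈ 𝒜 i → b ∈ 𝒜 j → mul a b ∈ 𝒜 (i + j)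
  one_mem : one ∈ 𝒜 0
  mul_assoc : ∀ a b c : M, mul (mul a b) c = mul a (mul b c)
  one_mul : ∀ a : M, mul one a = a
  mul_one : ∀ a : M, mul a one = a

/-- A differential graded algebra. -/
structure IsDGAlgebra (𝒜 : ℤ → Submodule k M) (mul : M →ₗ[k] M →ₗ[k] M) (one : M)
    (d : M →ₗ[k] M) extends IsGradedAlgebra k M 𝒜 mul one : Prop where
  d_mem : ∀ ⦃i : ℤ⦄ ⦃a : M⦄, a ∈ 𝒜 i → d a ∈ 𝒜 (i + 1)
  d_sq : ∀ a : M, d (d a) = 0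
  d_mul : ∀ ⦃i : ℤ⦄ ⦃a : M⦄ (b : M), a ∈ 𝒜 i →
    d (mul a b) = mul (d a) b + ((-1 : k) ^ i) • mul a (d b)

/-- A differential graded Poisson algebra with Poisson bracket of degree `p`. -/
structure IsDGPoisson (𝒜 : ℤ → Submodule k M) (mul : M →ₗ[k] M →ₗ[k] M) (one : M)
    (bracket : M →ₗ[k] M →ₗ[k] M) (d : M →ₗ[k] M) (p : ℤ)
    extends IsDGAlgebra k M 𝒜 mul one d : Prop where
  gcomm : ∀ ⦃i j : ℤ⦄ ⦃a b : M⦄, a ∈ 𝒜 i → b ∈ 𝒜 j →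
    mul a b = ((-1 : k) ^ (i * j)) • mul b a
  bracket_mem : ∀ ⦃i j : ℤ⦄ ⦃a b : M⦄, a ∈ 𝒜 i → b ∈ 𝒜 j → bracket a b ∈ 𝒜 (i + j + p)
  bracket_antisymm : ∀ ⦃i j : ℤ⦄ ⦃a b : M⦄, a ∈ 𝒜 i → b ∈ 𝒜 j →
    bracket a b = -(((-1 : k) ^ ((i + p) * (j + p))) • bracket b a)
  bracket_jacobi : ∀ ⦃i j : ℤ⦄ ⦃a b : M⦄ (c : M), a ∈ 𝒜 i → b ∈ 𝒜 j →
    bracket a (bracket b c) =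
      bracket (bracket a b) c + ((-1 : k) ^ ((i + p) * (j + p))) • bracket b (bracket a c)
  bracket_leibniz : ∀ ⦃i j : ℤ⦄ ⦃a b : M⦄ (c : M), a ∈ 𝒜 i → b ∈ 𝒜 j →
    bracket a (mul b c) =
      mul (bracket a b) c + ((-1 : k) ^ ((i + p) * j)) • mul b (bracket a c)
  d_bracket : ∀ ⦃i : ℤ⦄ ⦃a : M⦄ (b : M), a ∈ 𝒜 i →
    d (bracket a b) = bracket (d a) b + ((-1 : k) ^ (i + p)) • bracket a (d b)

/-- A `ℤ`-graded coalgebra, given by unbundled data. -/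
structure IsGradedCoalgebra (𝒜 : ℤ → Submodule k M) (comul : M →ₗ[k] M ⊗[k] M)
    (counit : M →ₗ[k] k) : Prop where
  comul_mem : ∀ ⦃i : ℤ⦄ ⦃a : M⦄, a ∈ 𝒜 i → comul a ∈ tgrade 𝒜 𝒜 i
  counit_zero : ∀ ⦃i : ℤ⦄ ⦃a : M⦄, a ∈ 𝒜 i → i ≠ 0 → counit a = 0
  coassoc : ∀ a : M,
    (TensorProduct.assoc k M M M) ((TensorProduct.map comul LinearMap.id) (comul a)) =
      (TensorProduct.map LinearMap.id comul) (comul a)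
  counit_comul_left : ∀ a : M,
    (TensorProduct.lid k M) ((TensorProduct.map counit LinearMap.id) (comul a)) = a
  counit_comul_right : ∀ a : M,
    (TensorProduct.rid k M) ((TensorProduct.map LinearMap.id counit) (comul a)) = a

/-- A `ℤ`-graded bialgebra (comultiplication is an algebra map for the Koszul-signed
multiplication on the tensor square). -/
structure IsGradedBialgebra (𝒜 : ℤ → Submodule k M) (mul : M →ₗ[k] M →ₗ[k] M) (one : M)
    (comul : M →ₗ[k] M ⊗[k] M) (counit : M →ₗ[k] k) : Prop where
  alg : IsGradedAlgebra k M 𝒜 mul one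
  coalg : IsGradedCoalgebra k M 𝒜 comul counit
  comul_one : comul one = one ⊗ₜ[k] one
  counit_one : counit one = 1
  counit_mul : ∀ a b : M, counit (mul a b) = counit a * counit b
  comul_mul : ∃ mul₂ : (M ⊗[k] M) →ₗ[k] (M ⊗[k] M) →ₗ[k] (M ⊗[k] M),
    KoszulMulChar 𝒜 𝒜 mul mul mul₂ ∧
      ∀ a b : M, comul (mul a b) = mul₂ (comul a) (comul b)

/-- A `ℤ`-graded Hopf algebra. -/
structure IsGradedHopf (𝒜 : ℤ → Submodule k M) (mul : M →ₗ[k] M →ₗ[k] M) (one : M)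
    (comul : M →ₗ[k] M ⊗[k] M) (counit : M →ₗ[k] k) (S : M →ₗ[k] M) : Prop where
  bialg : IsGradedBialgebra k M 𝒜 mul one comul counit
  antipode_mem : ∀ ⦃i : ℤ⦄ ⦃a : M⦄, a ∈ 𝒜 i → S a ∈ 𝒜 i
  antipode_left : ∀ a : M,
    TensorProduct.lift mul ((TensorProduct.map S LinearMap.id) (comul a)) = counit a • one
  antipode_right : ∀ a : M,
    TensorProduct.lift mul ((TensorProduct.map LinearMap.id S) (comul a)) = counit a • one

/-- `d` is a coderivation (with Koszul signs) and `ε ∘ d = 0`. -/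
def CoderivationProp (𝒜 : ℤ → Submodule k M) (comul : M →ₗ[k] M ⊗[k] M)
    (counit : M →ₗ[k] k) (d : M →ₗ[k] M) : Prop :=
  (∀ a : M, counit (d a) = 0) ∧
  ∃ D : M ⊗[k] M →ₗ[k] M ⊗[k] M, KoszulDiffChar 𝒜 d d D ∧
    ∀ a : M, comul (d a) = D (comul a)

/-- A differential graded bialgebra. -/
structure IsDGBialgebra (𝒜 : ℤ → Submodule k M) (mul : M →ₗ[k] M →ₗ[k] M) (one : M)
    (comul : M →ₗ[k] M ⊗[k] M) (counit : M →ₗ[k] k) (d : M →ₗ[k] M) : Prop where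
  bialg : IsGradedBialgebra k M 𝒜 mul one comul counit
  dga : IsDGAlgebra k M 𝒜 mul one d
  coderiv : CoderivationProp k M 𝒜 comul counit d

/-- A differential graded Hopf algebra. -/
structure IsDGHopf (𝒜 : ℤ → Submodule k M) (mul : M →ₗ[k] M →ₗ[k] M) (one : M)
    (comul : M →ₗ[k] M ⊗[k] M) (counit : M →ₗ[k] k) (d : M →ₗ[k] M) (S : M →ₗ[k] M) :
    Prop where
  dgbialg : IsDGBialgebra k M 𝒜 mul one comul counit d
  antipode_mem : ∀ ⦃i : ℤ⦄ ⦃a : M⦄, a ∈ 𝒜 i → S a ∈ 𝒜 i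
  antipode_left : ∀ a : M,
    TensorProduct.lift mul ((TensorProduct.map S LinearMap.id) (comul a)) = counit a • one
  antipode_right : ∀ a : M,
    TensorProduct.lift mul ((TensorProduct.map LinearMap.id S) (comul a)) = counit a • one

/-- A differential graded Poisson bialgebra (bracket of degree 0). -/
structure IsDGPoissonBialgebra (𝒜 : ℤ → Submodule k M) (mul : M →ₗ[k] M →ₗ[k] M) (one : M)
    (bracket : M →ₗ[k] M →ₗ[k] M) (d : M →ₗ[k] M)
    (comul : M →ₗ[k] M ⊗[k] M) (counit : M →ₗ[k] k) : Prop where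
  poisson : IsDGPoisson k M 𝒜 mul one bracket d 0
  dgbialg : IsDGBialgebra k M 𝒜 mul one comul counit d
  comul_bracket : ∃ br₂ : (M ⊗[k] M) →ₗ[k] (M ⊗[k] M) →ₗ[k] (M ⊗[k] M),
    KoszulBracketChar 𝒜 𝒜 mul mul bracket bracket 0 br₂ ∧
      ∀ a b : M, comul (bracket a b) = br₂ (comul a) (comul b)

/-- A differential graded Poisson Hopf algebra (bracket of degree 0). -/
structure IsDGPoissonHopf (𝒜 : ℤ → Submodule k M) (mul : M →ₗ[k] M →ₗ[k] M) (one : M)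
    (bracket : M →ₗ[k] M →ₗ[k] M) (d : M →ₗ[k] M)
    (comul : M →ₗ[k] M ⊗[k] M) (counit : M →ₗ[k] k) (S : M →ₗ[k] M) : Prop where
  toPoissonBialg : IsDGPoissonBialgebra k M 𝒜 mul one bracket d comul counit
  antipode_mem : ∀ ⦃i : ℤ⦄ ⦃a : M⦄, a ∈ 𝒜 i → S a ∈ 𝒜 i
  antipode_left : ∀ a : M,
    TensorProduct.lift mul ((TensorProduct.map S LinearMap.id) (comul a)) = counit a • one
  antipode_right : ∀ a : M,
    TensorProduct.lift mul ((TensorProduct.map LinearMap.id S) (comul a)) = counit a • one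

end Structures

/-- A homomorphism of differential graded algebras (unbundled data). -/
structure IsDGAlgHom {M N : Type} [AddCommGroup M] [Module k M] [AddCommGroup N] [Module k N]
    (𝒜 : ℤ → Submodule k M) (mulM : M →ₗ[k] M →ₗ[k] M) (oneM : M) (dM : M →ₗ[k] M)
    (ℬ : ℤ → Submodule k N) (mulN : N →ₗ[k] N →ₗ[k] N) (oneN : N) (dN : N →ₗ[k] N)
    (f : M →ₗ[k] N) : Prop where
  map_mem : ∀ ⦃i : ℤ⦄ ⦃a : M⦄, a ∈ 𝒜 i → f a ∈ ℬ i
  map_one : f oneM = oneN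
  map_mul : ∀ a b : M, f (mulM a b) = mulN (f a) (f b)
  map_d : ∀ a : M, f (dM a) = dN (f a)

/-- A homomorphism of differential graded Poisson algebras. -/
structure IsDGPoissonHom {M N : Type} [AddCommGroup M] [Module k M] [AddCommGroup N] [Module k N]
    (𝒜 : ℤ → Submodule k M) (mulM : M →ₗ[k] M →ₗ[k] M) (oneM : M)
    (brM : M →ₗ[k] M →ₗ[k] M) (dM : M →ₗ[k] M)
    (ℬ : ℤ → Submodule k N) (mulN : N →ₗ[k] N →ₗ[k] N) (oneN : N)
    (brN : N →ₗ[k] N →ₗ[k] N) (dN : N →ₗ[k] N)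
    (f : M →ₗ[k] N)
    extends IsDGAlgHom 𝒜 mulM oneM dM ℬ mulN oneN dN f : Prop where
  map_bracket : ∀ a b : M, f (brM a b) = brN (f a) (f b)

/-- `(E, m, h)` is the universal enveloping algebra of the DG Poisson algebra
`(A, 𝒜, mulA, oneA, brA, dA)` with bracket of degree `p`. -/
structure IsUEA {A E : Type} [AddCommGroup A] [Module k A] [AddCommGroup E] [Module k E]
    (𝒜 : ℤ → Submodule k A) (mulA : A →ₗ[k] A →ₗ[k] A) (oneA : A)
    (brA : A →ₗ[k] A →ₗ[k] A) (dA : A →ₗ[k] A) (p : ℤ)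
    (ℰ : ℤ → Submodule k E) (mulE : E →ₗ[k] E →ₗ[k] E) (oneE : E) (dE : E →ₗ[k] E)
    (m h : A →ₗ[k] E) : Prop where
  dga : IsDGAlgebra k E ℰ mulE oneE dE
  m_hom : IsDGAlgHom 𝒜 mulA oneA dA ℰ mulE oneE dE m
  h_mem : ∀ ⦃i : ℤ⦄ ⦃a : A⦄, a ∈ 𝒜 i → h a ∈ ℰ (i + p)
  h_d : ∀ a : A, h (dA a) = dE (h a)
  h_lie : ∀ ⦃i j : ℤ⦄ ⦃a b : A⦄, a ∈ 𝒜 i → b ∈ 𝒜 j →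
    h (brA a b) = mulE (h a) (h b) - ((-1 : k) ^ ((i + p) * (j + p))) • mulE (h b) (h a)
  m_bracket : ∀ ⦃i j : ℤ⦄ ⦃a b : A⦄, a ∈ 𝒜 i → b ∈ 𝒜 j →
    m (brA a b) = mulE (h a) (m b) - ((-1 : k) ^ ((i + p) * j)) • mulE (m b) (h a)
  h_mul : ∀ ⦃i j : ℤ⦄ ⦃a b : A⦄, a ∈ 𝒜 i → b ∈ 𝒜 j →
    h (mulA a b) = mulE (m a) (h b) + ((-1 : k) ^ (i * j)) • mulE (m b) (h a)
  universal : ∀ (D : Type) [AddCommGroup D] [Module k D]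
    (𝒟 : ℤ → Submodule k D) (mulD : D →ₗ[k] D →ₗ[k] D) (oneD : D) (dD : D →ₗ[k] D)
    (f g : A →ₗ[k] D),
    IsDGAlgebra k D 𝒟 mulD oneD dD →
    IsDGAlgHom 𝒜 mulA oneA dA 𝒟 mulD oneD dD f →
    (∀ ⦃i : ℤ⦄ ⦃a : A⦄, a ∈ 𝒜 i → g a ∈ 𝒟 (i + p)) →
    (∀ a : A, g (dA a) = dD (g a)) →
    (∀ ⦃i j : ℤ⦄ ⦃a b : A⦄, a ∈ 𝒜 i → b ∈ 𝒜 j →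
      g (brA a b) = mulD (g a) (g b) - ((-1 : k) ^ ((i + p) * (j + p))) • mulD (g b) (g a)) →
    (∀ ⦃i j : ℤ⦄ ⦃a b : A⦄, a ∈ 𝒜 i → b ∈ 𝒜 j →
      f (brA a b) = mulD (g a) (f b) - ((-1 : k) ^ ((i + p) * j)) • mulD (f b) (g a)) →
    (∀ ⦃i j : ℤ⦄ ⦃a b : A⦄, a ∈ 𝒜 i → b ∈ 𝒜 j →
      g (mulA a b) = mulD (f a) (g b) + ((-1 : k) ^ (i * j)) • mulD (f b) (g a)) →
    ∃! φ : E →ₗ[k] D, IsDGAlgHom ℰ mulE oneE dE 𝒟 mulD oneD dD φ ∧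
      φ ∘ₗ m = f ∧ φ ∘ₗ h = g

end DGPH

namespace DGPH

open TensorProduct


section Aux

variable {k : Type} [Field k] {E : Type} [AddCommGroup E] [Module k E]

lemma eps_add (i j : ℤ) : (-1:k)^(i+j) = (-1:k)^i * (-1:k)^j :=
  zpow_add₀ (by norm_num) i j

lemma smul_smul_eps (m n : ℤ) (x : E) :
    (-1:k)^m • (-1:k)^n • x = (-1:k)^(m+n) • x := by
  rw [smul_smul, ← eps_add]

lemma eps_even (m : ℤ) : (-1:k)^(2*m) = 1 := by
  rw [zpow_mul]; norm_num

lemma eps_parity {m n : ℤ} (c : ℤ) (h : m = n + 2*c) : ((-1:k)^m) = (-1:k)^n := by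
  rw [h, eps_add, eps_even, mul_one]

lemma eps_congr {m n : ℤ} (h : m = n) (x : E) : (-1:k)^m • x = (-1:k)^n • x := by rw [h]

lemma grading_ind (ℰ : ℤ → Submodule k E) (htot : (⨆ i, ℰ i) = ⊤) {P : E → Prop}
    (h0 : P 0) (hadd : ∀ x y, P x → P y → P (x + y))
    (hp : ∀ i : ℤ, ∀ x ∈ ℰ i, P x) (x : E) : P x := by
  have hx : x ∈ ⨆ i, ℰ i := htot ▸ Submodule.mem_top
  exact Submodule.iSup_induction (motive := P) ℰ hx hp h0 hadd

/-- char: `mulOp u v = (-1)^{ij} • mulE v u` on homogeneous pieces. -/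
def OpChar (ℰ : ℤ → Submodule k E) (mulE mulOp : E →ₗ[k] E →ₗ[k] E) : Prop :=
  ∀ ⦃i j : ℤ⦄ ⦃u v : E⦄, u ∈ ℰ i → v ∈ ℰ j →
    mulOp u v = ((-1:k)^(i*j)) • mulE v u

lemma OpChar.symm {ℰ : ℤ → Submodule k E} {mulE mulOp : E →ₗ[k] E →ₗ[k] E}
    (h : OpChar ℰ mulE mulOp) : OpChar ℰ mulOp mulE := by
  intro i j u v hu hv
  rw [h hv hu, smul_smul_eps, eps_parity (i*j) (show i*j + j*i = 0 + 2*(i*j) by ring), zpow_zero, one_smul]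

open DirectSum in
lemma exists_opMul (ℰ : ℤ → Submodule k E) (mulE : E →ₗ[k] E →ₗ[k] E)
    (hind : iSupIndep ℰ) (htot : (⨆ i, ℰ i) = ⊤) :
    ∃ mulOp : E →ₗ[k] E →ₗ[k] E, OpChar ℰ mulE mulOp := by
  have hint : DirectSum.IsInternal ℰ :=
    DirectSum.isInternal_submodule_of_iSupIndep_of_iSup_eq_top hind htot
  let e : (⨁ i, ℰ i) ≃ₗ[k] E := LinearEquiv.ofBijective (DirectSum.coeLinearMap ℰ) hint
  let dec : E →ₗ[k] ⨁ i, ℰ i := e.symm.toLinearMap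
  let B : ∀ i j : ℤ, ℰ i →ₗ[k] ℰ j →ₗ[k] E := fun i j =>
    LinearMap.compl₂ (((((-1:k)^(i*j)) • mulE.flip) : E →ₗ[k] E →ₗ[k] E).comp (ℰ i).subtype)
      ((ℰ j).subtype)
  let L : ∀ i : ℤ, (⨁ j, ℰ j) →ₗ[k] ℰ i →ₗ[k] E := fun i =>
    DirectSum.toModule k ℤ _ (fun j => (B i j).flip)
  let B' : (⨁ i, ℰ i) →ₗ[k] (⨁ j, ℰ j) →ₗ[k] E :=
    DirectSum.toModule k ℤ _ (fun i => (L i).flip)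
  refine ⟨LinearMap.compl₂ (B'.comp dec) dec, ?_⟩
  intro i j u v hu hv
  have hdu : dec u = DirectSum.lof k ℤ (fun i => ℰ i) i ⟨u, hu⟩ := by
    apply e.symm_apply_eq.mpr
    simp [e, DirectSum.lof_eq_of, DirectSum.coeLinearMap_of]
    exact (DirectSum.coeLinearMap_of ℰ i ⟨u, hu⟩).symm
  have hdv : dec v = DirectSum.lof k ℤ (fun i => ℰ i) j ⟨v, hv⟩ := by
    apply e.symm_apply_eq.mpr
    simp [e, DirectSum.lof_eq_of, DirectSum.coeLinearMap_of]
    exact (DirectSum.coeLinearMap_of ℰ j ⟨v, hv⟩).symm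
  show B' (dec u) (dec v) = _
  rw [hdu, hdv]
  simp [B', L, B, DirectSum.toModule_lof]

/-- The opposite multiplication makes `E` a DG algebra again. -/
lemma opMul_dga {ℰ : ℤ → Submodule k E} {mulE : E →ₗ[k] E →ₗ[k] E} {oneE : E} {dE : E →ₗ[k] E}
    (hDG : IsDGAlgebra k E ℰ mulE oneE dE)
    {mulOp : E →ₗ[k] E →ₗ[k] E} (hch : OpChar ℰ mulE mulOp) :
    IsDGAlgebra k E ℰ mulOp oneE dE := by
  have htot := hDG.total
  refine ⟨⟨hDG.indep, hDG.total, ?_, hDG.one_mem, ?_, ?_, ?_⟩, hDG.d_mem, hDG.d_sq, ?_⟩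
  · -- mul_mem
    intro i j a b ha hb
    rw [hch ha hb]
    exact Submodule.smul_mem _ _ (add_comm j i ▸ hDG.mul_mem hb ha)
  · -- assoc
    intro a b c
    refine grading_ind ℰ htot (P := fun a => ∀ b c : E,
      mulOp (mulOp a b) c = mulOp a (mulOp b c)) ?_ ?_ ?_ a b c
    · intro b c; simp
    · intro x y hx hy b c
      simp only [map_add, LinearMap.add_apply, hx, hy]
    · intro i a ha
      refine grading_ind ℰ htot (P := fun b => ∀ c : E,
        mulOp (mulOp a b) c = mulOp a (mulOp b c)) ?_ ?_ ?_
      · intro c; simp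
      · intro x y hx hy c
        simp only [map_add, map_zero, LinearMap.add_apply, LinearMap.zero_apply, hx, hy]
      · intro j b hb
        refine grading_ind ℰ htot (P := fun c =>
          mulOp (mulOp a b) c = mulOp a (mulOp b c)) ?_ ?_ ?_
        · simp
        · intro x y hx hy
          simp only [map_add, hx, hy]
        · intro l c hc
          have hba : mulE b a ∈ ℰ (i+j) := add_comm j i ▸ hDG.mul_mem hb ha
          have hcb : mulE c b ∈ ℰ (j+l) := add_comm l j ▸ hDG.mul_mem hc hb
          rw [hch ha hb, hch hb hc, map_smul, LinearMap.smul_apply, map_smul,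
            hch hba hc, hch ha hcb, smul_smul_eps, smul_smul_eps, hDG.mul_assoc c b a]
          exact eps_congr (by ring) _
  · -- one_mul
    intro a
    refine grading_ind ℰ htot (P := fun a => mulOp oneE a = a) ?_ ?_ ?_ a
    · simp
    · intro x y hx hy; simp only [map_add, hx, hy]
    · intro i a ha
      rw [hch hDG.one_mem ha, zero_mul, zpow_zero, one_smul, hDG.mul_one]
  · -- mul_one
    intro a
    refine grading_ind ℰ htot (P := fun a => mulOp a oneE = a) ?_ ?_ ?_ a
    · simp
    · intro x y hx hy
      simp only [map_add, LinearMap.add_apply, hx, hy]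
    · intro i a ha
      rw [hch ha hDG.one_mem, mul_zero, zpow_zero, one_smul, hDG.one_mul]
  · -- d_mul
    intro i a b ha
    refine grading_ind ℰ htot (P := fun b =>
      dE (mulOp a b) = mulOp (dE a) b + ((-1:k)^i) • mulOp a (dE b)) ?_ ?_ ?_ b
    · simp
    · intro x y hx hy
      simp only [map_add, LinearMap.add_apply, hx, hy, smul_add]
      abel
    · intro j b hb
      rw [hch ha hb, map_smul, hDG.d_mul a hb, hch (hDG.d_mem ha) hb,
        hch ha (hDG.d_mem hb), smul_add, smul_smul_eps, smul_smul_eps,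
        eps_parity i (by ring : i + i*(j+1) = (i*j) + 2*i),
        eps_congr (by ring : i*j + j = (i+1)*j)]
      abel

/-- A DG algebra hom into `mulE` is also one into `mulOp`, when the source is
graded-commutative. -/
lemma hom_op {A : Type} [AddCommGroup A] [Module k A] {𝒜 : ℤ → Submodule k A}
    {mulA : A →ₗ[k] A →ₗ[k] A} {oneA : A} {dA : A →ₗ[k] A}
    {ℰ : ℤ → Submodule k E} {mulE : E →ₗ[k] E →ₗ[k] E} {oneE : E} {dE : E →ₗ[k] E}
    {f : A →ₗ[k] E}
    (htotA : (⨆ i, 𝒜 i) = ⊤)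
    (hgc : ∀ ⦃i j : ℤ⦄ ⦃a b : A⦄, a ∈ 𝒜 i → b ∈ 𝒜 j →
      mulA a b = ((-1:k)^(i*j)) • mulA b a)
    (hf : IsDGAlgHom 𝒜 mulA oneA dA ℰ mulE oneE dE f)
    {mulOp : E →ₗ[k] E →ₗ[k] E} (hch : OpChar ℰ mulE mulOp) :
    IsDGAlgHom 𝒜 mulA oneA dA ℰ mulOp oneE dE f := by
  refine ⟨hf.map_mem, hf.map_one, ?_, hf.map_d⟩
  intro a b
  refine grading_ind 𝒜 htotA (P := fun a => ∀ b : A,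
    f (mulA a b) = mulOp (f a) (f b)) ?_ ?_ ?_ a b
  · intro b; simp
  · intro x y hx hy b
    simp only [map_add, LinearMap.add_apply, hx, hy]
  · intro i a ha
    refine grading_ind 𝒜 htotA (P := fun b =>
      f (mulA a b) = mulOp (f a) (f b)) ?_ ?_ ?_
    · simp
    · intro x y hx hy
      simp only [map_add, hx, hy]
    · intro j b hb
      rw [hgc ha hb, map_smul, hf.map_mul, hch (hf.map_mem ha) (hf.map_mem hb)]

/-- Transfer of the multiplicativity of a map along the two op-structures. -/
lemma map_op {D : Type} [AddCommGroup D] [Module k D]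
    {ℰ : ℤ → Submodule k E} {mulE mulOp : E →ₗ[k] E →ₗ[k] E}
    {𝒟 : ℤ → Submodule k D} {mulD mulDop : D →ₗ[k] D →ₗ[k] D}
    (htot : (⨆ i, ℰ i) = ⊤)
    (hchE : OpChar ℰ mulE mulOp) (hchD : OpChar 𝒟 mulD mulDop)
    {φ : E →ₗ[k] D} (hmem : ∀ ⦃i : ℤ⦄ ⦃u : E⦄, u ∈ ℰ i → φ u ∈ 𝒟 i)
    (hmul : ∀ u v : E, φ (mulE u v) = mulDop (φ u) (φ v)) :
    ∀ u v : E, φ (mulOp u v) = mulD (φ u) (φ v) := by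
  intro u v
  refine grading_ind ℰ htot (P := fun u => ∀ v : E,
    φ (mulOp u v) = mulD (φ u) (φ v)) ?_ ?_ ?_ u v
  · intro v; simp
  · intro x y hx hy v
    simp only [map_add, LinearMap.add_apply, hx, hy]
  · intro i u hu
    refine grading_ind ℰ htot (P := fun v =>
      φ (mulOp u v) = mulD (φ u) (φ v)) ?_ ?_ ?_
    · simp
    · intro x y hx hy
      simp only [map_add, hx, hy]
    · intro j v hv
      rw [hchE hu hv, map_smul, hmul, hchD (hmem hv) (hmem hu), smul_smul_eps,
        eps_parity (i*j) (show i*j + j*i = 0 + 2*(i*j) by ring), zpow_zero, one_smul]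

/-- The key sign computation: the UEA relations for `brA` w.r.t. `mulD` become the
relations for `-brA` w.r.t. the opposite multiplication. -/
lemma op_rel {A D : Type} [AddCommGroup A] [Module k A] [AddCommGroup D] [Module k D]
    (𝒜 : ℤ → Submodule k A) (mulA : A →ₗ[k] A →ₗ[k] A) (brA : A →ₗ[k] A →ₗ[k] A)
    {𝒟 : ℤ → Submodule k D} {mulD mulDop : D →ₗ[k] D →ₗ[k] D} (f g : A →ₗ[k] D)
    (hanti : ∀ ⦃i j : ℤ⦄ ⦃a b : A⦄, a ∈ 𝒜 i → b ∈ 𝒜 j →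
      brA a b = -(((-1:k)^(i*j)) • brA b a))
    (hch : OpChar 𝒟 mulD mulDop)
    (hfmem : ∀ ⦃i : ℤ⦄ ⦃a : A⦄, a ∈ 𝒜 i → f a ∈ 𝒟 i)
    (hgmem : ∀ ⦃i : ℤ⦄ ⦃a : A⦄, a ∈ 𝒜 i → g a ∈ 𝒟 i)
    (hglie : ∀ ⦃i j : ℤ⦄ ⦃a b : A⦄, a ∈ 𝒜 i → b ∈ 𝒜 j →
      g (brA a b) = mulD (g a) (g b) - ((-1:k)^(i*j)) • mulD (g b) (g a))
    (hfbr : ∀ ⦃i j : ℤ⦄ ⦃a b : A⦄, a ∈ 𝒜 i → b ∈ 𝒜 j →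
      f (brA a b) = mulD (g a) (f b) - ((-1:k)^(i*j)) • mulD (f b) (g a))
    (hgmul : ∀ ⦃i j : ℤ⦄ ⦃a b : A⦄, a ∈ 𝒜 i → b ∈ 𝒜 j →
      g (mulA a b) = mulD (f a) (g b) + ((-1:k)^(i*j)) • mulD (f b) (g a)) :
    (∀ ⦃i j : ℤ⦄ ⦃a b : A⦄, a ∈ 𝒜 i → b ∈ 𝒜 j →
      g ((-brA) a b) = mulDop (g a) (g b) - ((-1:k)^(i*j)) • mulDop (g b) (g a)) ∧
    (∀ ⦃i j : ℤ⦄ ⦃a b : A⦄, a ∈ 𝒜 i → b ∈ 𝒜 j →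
      f ((-brA) a b) = mulDop (g a) (f b) - ((-1:k)^(i*j)) • mulDop (f b) (g a)) ∧
    (∀ ⦃i j : ℤ⦄ ⦃a b : A⦄, a ∈ 𝒜 i → b ∈ 𝒜 j →
      g (mulA a b) = mulDop (f a) (g b) + ((-1:k)^(i*j)) • mulDop (f b) (g a)) := by
  refine ⟨?_, ?_, ?_⟩
  · intro i j a b ha hb
    simp only [LinearMap.neg_apply, map_neg]
    rw [hch (hgmem ha) (hgmem hb), hch (hgmem hb) (hgmem ha), smul_smul_eps,
      eps_parity (i*j) (show i*j + j*i = 0 + 2*(i*j) by ring), zpow_zero, one_smul, hglie ha hb, neg_sub]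
  · intro i j a b ha hb
    simp only [LinearMap.neg_apply, map_neg]
    rw [hch (hgmem ha) (hfmem hb), hch (hfmem hb) (hgmem ha), smul_smul_eps,
      eps_parity (i*j) (show i*j + j*i = 0 + 2*(i*j) by ring), zpow_zero, one_smul, hfbr ha hb, neg_sub]
  · intro i j a b ha hb
    have e1 : mulD (g a) (f b) = f (brA a b) + ((-1:k)^(i*j)) • mulD (f b) (g a) :=
      (eq_sub_iff_add_eq.mp (hfbr ha hb)).symm
    have e2 : mulD (g b) (f a) = f (brA b a) + ((-1:k)^(j*i)) • mulD (f a) (g b) :=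
      (eq_sub_iff_add_eq.mp (hfbr hb ha)).symm
    rw [hch (hfmem ha) (hgmem hb), hch (hfmem hb) (hgmem ha), smul_smul_eps,
      eps_parity (i*j) (show i*j + j*i = 0 + 2*(i*j) by ring), zpow_zero, one_smul,
      e1, e2, hgmul ha hb, hanti ha hb, map_neg, map_smul, smul_add, smul_smul_eps,
      eps_parity (i*j) (show i*j + j*i = 0 + 2*(i*j) by ring), zpow_zero, one_smul]
    abel

end Aux

/-- If `(E, m, h)` is the universal enveloping algebra of a DG Poisson
algebra `A` with bracket of degree 0, then the DG opposite algebra `(E^{op}, m, h)` (with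
Koszul-signed opposite multiplication) is the universal enveloping algebra of
`A₁ = (A, ·, -{·,·}, d)`. -/
theorem op_isUEA {k : Type} [Field k]
    (A E : Type) [AddCommGroup A] [Module k A] [AddCommGroup E] [Module k E]
    (𝒜 : ℤ → Submodule k A) (mulA : A →ₗ[k] A →ₗ[k] A) (oneA : A)
    (brA : A →ₗ[k] A →ₗ[k] A) (dA : A →ₗ[k] A)
    (ℰ : ℤ → Submodule k E) (mulE : E →ₗ[k] E →ₗ[k] E) (oneE : E) (dE : E →ₗ[k] E)
    (m h : A →ₗ[k] E)
    (hP : IsDGPoisson k A 𝒜 mulA oneA brA dA 0)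
    (hU : IsUEA 𝒜 mulA oneA brA dA 0 ℰ mulE oneE dE m h) :
    ∃ mulOp : E →ₗ[k] E →ₗ[k] E,
      (∀ ⦃i j : ℤ⦄ ⦃u v : E⦄, u ∈ ℰ i → v ∈ ℰ j →
        mulOp u v = ((-1 : k) ^ (i * j)) • mulE v u) ∧
      IsUEA 𝒜 mulA oneA (-brA) dA 0 ℰ mulOp oneE dE m h := by
  obtain ⟨mulOp, hch⟩ := exists_opMul ℰ mulE hU.dga.indep hU.dga.total
  have hhmem : ∀ ⦃i : ℤ⦄ ⦃a : A⦄, a ∈ 𝒜 i → h a ∈ ℰ i := by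
    intro i a ha; have := hU.h_mem ha; simp only [add_zero] at this; exact this
  have hanti : ∀ ⦃i j : ℤ⦄ ⦃a b : A⦄, a ∈ 𝒜 i → b ∈ 𝒜 j →
      brA a b = -(((-1:k)^(i*j)) • brA b a) := by
    intro i j a b ha hb; have := hP.bracket_antisymm ha hb
    simp only [add_zero] at this; exact this
  have hlie : ∀ ⦃i j : ℤ⦄ ⦃a b : A⦄, a ∈ 𝒜 i → b ∈ 𝒜 j →
      h (brA a b) = mulE (h a) (h b) - ((-1:k)^(i*j)) • mulE (h b) (h a) := by
    intro i j a b ha hb; have := hU.h_lie ha hb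
    simp only [add_zero] at this; exact this
  have hmbr : ∀ ⦃i j : ℤ⦄ ⦃a b : A⦄, a ∈ 𝒜 i → b ∈ 𝒜 j →
      m (brA a b) = mulE (h a) (m b) - ((-1:k)^(i*j)) • mulE (m b) (h a) := by
    intro i j a b ha hb; have := hU.m_bracket ha hb
    simp only [add_zero] at this; exact this
  obtain ⟨Hlie, Hbr, Hmul⟩ :=
    op_rel 𝒜 mulA brA m h hanti hch hU.m_hom.map_mem hhmem hlie hmbr hU.h_mul
  refine ⟨mulOp, fun i j u v hu hv => hch hu hv, ?_⟩
  refine ⟨opMul_dga hU.dga hch, hom_op hP.total hP.gcomm hU.m_hom hch, hU.h_mem, hU.h_d,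
    ?_, ?_, Hmul, ?_⟩
  · intro i j a b ha hb; simp only [add_zero]; exact Hlie ha hb
  · intro i j a b ha hb; simp only [add_zero]; exact Hbr ha hb
  · -- universal property
    intro D _ _ 𝒟 mulD oneD dD f g hDdga hf hg hgd hglie hfbr hgmul
    obtain ⟨mulDop, hchD⟩ := exists_opMul 𝒟 mulD hDdga.indep hDdga.total
    have hgmem : ∀ ⦃i : ℤ⦄ ⦃a : A⦄, a ∈ 𝒜 i → g a ∈ 𝒟 i := by
      intro i a ha; have := hg ha; simp only [add_zero] at this; exact this
    have hantiN : ∀ ⦃i j : ℤ⦄ ⦃a b : A⦄, a ∈ 𝒜 i → b ∈ 𝒜 j →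
        (-brA) a b = -(((-1:k)^(i*j)) • (-brA) b a) := by
      intro i j a b ha hb
      simp only [LinearMap.neg_apply]
      rw [hanti ha hb]; simp [smul_neg]
    have hglie' : ∀ ⦃i j : ℤ⦄ ⦃a b : A⦄, a ∈ 𝒜 i → b ∈ 𝒜 j →
        g ((-brA) a b) = mulD (g a) (g b) - ((-1:k)^(i*j)) • mulD (g b) (g a) := by
      intro i j a b ha hb; have := hglie ha hb
      simp only [add_zero] at this; exact this
    have hfbr' : ∀ ⦃i j : ℤ⦄ ⦃a b : A⦄, a ∈ 𝒜 i → b ∈ 𝒜 j →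
        f ((-brA) a b) = mulD (g a) (f b) - ((-1:k)^(i*j)) • mulD (f b) (g a) := by
      intro i j a b ha hb; have := hfbr ha hb
      simp only [add_zero] at this; exact this
    obtain ⟨Glie, Fbr, Gmul⟩ :=
      op_rel 𝒜 mulA (-brA) f g hantiN hchD hf.map_mem hgmem hglie' hfbr' hgmul
    simp only [neg_neg] at Glie Fbr
    obtain ⟨φ, ⟨hφ, hφm, hφh⟩, huniq⟩ := hU.universal D 𝒟 mulDop oneD dD f g
      (opMul_dga hDdga hchD) (hom_op hP.total hP.gcomm hf hchD) hg hgd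
      (by intro i j a b ha hb; simp only [add_zero]; exact Glie ha hb)
      (by intro i j a b ha hb; simp only [add_zero]; exact Fbr ha hb)
      Gmul
    refine ⟨φ, ⟨⟨hφ.map_mem, hφ.map_one,
      map_op hU.dga.total hch hchD hφ.map_mem hφ.map_mul, hφ.map_d⟩, hφm, hφh⟩, ?_⟩
    rintro ψ ⟨hψ, hψm, hψh⟩
    exact huniq ψ ⟨⟨hψ.map_mem, hψ.map_one,
      map_op hU.dga.total hch.symm hchD.symm hψ.map_mem hψ.map_mul, hψ.map_d⟩, hψm, hψh⟩

end DGPH
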